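/- The hoisting transformations terminate: there is no infinite sequence of hoisting steps. Concretely, defining the size measure ms(@(x,x⁺)) = 1, ms(let x = λy⁺.M in N) = 2·ms(M) + ms(N), ms(let x = C in N) = 2·ms(N) for non-function C, ms(ℓ > N) = 2·ms(N), every hoisting step strictly decreases ms. -/
import Mathlib


/-!
Statement 9: The hoisting transformations terminate: every hoisting step
strictly decreases the size measure `ms`, and there is no infinite sequence
of hoisting steps.
-/

namespace CostLabelling

abbrev Var := ℕ
abbrev Label := ℕ

inductive Tm : Type where
  | var : Var → Tm
  | lam : List Var → Tm → Tm
  | app : Tm → List Tm → Tm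
  | tup : List Tm → Tm
  | proj : ℕ → Tm → Tm
  | letin : Var → Tm → Tm → Tm
  | pre : Label → Tm → Tm
  | post : Tm → Label → Tm

inductive IsValue : Tm → Prop where
  | var : ∀ x, IsValue (.var x)
  | lam : ∀ xs M, IsValue (.lam xs M)
  | tup : ∀ Vs, (∀ V ∈ Vs, IsValue V) → IsValue (.tup Vs)

mutual
def subst (V : Tm) (x : Var) : Tm → Tm
  | .var y => if y = x then V else .var y
  | .lam xs M => if x ∈ xs then .lam xs M else .lam xs (subst V x M)
  | .app M Ns => .app (subst V x M) (substList V x Ns)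
  | .tup Ms => .tup (substList V x Ms)
  | .proj i M => .proj i (subst V x M)
  | .letin y M N => .letin y (subst V x M) (if y = x then N else subst V x N)
  | .pre l M => .pre l (subst V x M)
  | .post M l => .post (subst V x M) l
def substList (V : Tm) (x : Var) : List Tm → List Tm
  | [] => []
  | M :: Ms => subst V x M :: substList V x Ms
end

mutual
def fv : Tm → List Var
  | .var x => [x]
  | .lam xs M => (fv M).filter (fun y => y ∉ xs)
  | .app M Ns => fv M ++ fvList Ns
  | .tup Ms => fvList Ms
  | .proj _ M => fv M
  | .letin y M N => fv M ++ (fv N).filter (fun z => z ≠ y)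
  | .pre _ M => fv M
  | .post M _ => fv M
def fvList : List Tm → List Var
  | [] => []
  | M :: Ms => fv M ++ fvList Ms
end

/-- `C` is not a function. -/
def NonFun (C : Tm) : Prop := ∀ ys B, C ≠ .lam ys B

/-- Restricted (simple) terms `T ::= @(x,x⁺) | let x = C in T | ℓ > T` with
`C ::= (x*) | πᵢ(x)` : terms containing no function definitions. -/
inductive Simple : Tm → Prop where
  | app : ∀ (x : Var) (ys : List Var), Simple (.app (.var x) (ys.map .var))
  | letTup : ∀ x (ys : List Var) T, Simple T →
      Simple (.letin x (.tup (ys.map .var)) T)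
  | letProj : ∀ x i (y : Var) T, Simple T →
      Simple (.letin x (.proj i (.var y)) T)
  | pre : ∀ l T, Simple T → Simple (.pre l T)

/-- Hoisting contexts
`D ::= [] | let x = C in D | let x = λy⁺.D in M | ℓ > D`. -/
inductive HCtx : Type where
  | hole : HCtx
  | letC : Var → Tm → HCtx → HCtx
  | letLam : Var → List Var → HCtx → Tm → HCtx
  | pre : Label → HCtx → HCtx

def hplug : HCtx → Tm → Tm
  | .hole, M => M
  | .letC x C D, M => .letin x C (hplug D M)
  | .letLam x ys D N, M => .letin x (.lam ys (hplug D M)) N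
  | .pre l D, M => .pre l (hplug D M)

/-- The hoisting transformations `(h₁)`, `(h₂)`, `(h₃)`, applied under a
hoisting context `D`. -/
inductive Hoist : Tm → Tm → Prop where
  | h1 : ∀ D x C y (zs : List Var) T M, Simple T → NonFun C →
      x ∉ fv (.lam zs T) →
      Hoist (hplug D (.letin x C (.letin y (.lam zs T) M)))
            (hplug D (.letin y (.lam zs T) (.letin x C M)))
  | h2 : ∀ D x (ws : List Var) y (zs : List Var) T M N, Simple T →
      (∀ w ∈ ws, w ∉ fv (.lam zs T)) →
      Hoist (hplug D (.letin x (.lam ws (.letin y (.lam zs T) M)) N))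
            (hplug D (.letin y (.lam zs T) (.letin x (.lam ws M) N)))
  | h3 : ∀ D l y (zs : List Var) T M, Simple T →
      Hoist (hplug D (.pre l (.letin y (.lam zs T) M)))
            (hplug D (.letin y (.lam zs T) (.pre l M)))

/-- The size measure: `ms(@(x,x⁺)) = 1`,
`ms(let x = λy⁺.M in N) = 2·ms(M) + ms(N)`,
`ms(let x = C in N) = 2·ms(N)` for non-function `C`,
`ms(ℓ > N) = 2·ms(N)`. -/
def ms : Tm → ℕ
  | .app _ _ => 1
  | .letin _ (.lam _ M) N => 2 * ms M + ms N
  | .letin _ _ N => 2 * ms N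
  | .pre _ N => 2 * ms N
  | _ => 1

theorem ms_pos : ∀ M, 0 < ms M
  | .var _ => by simp [ms]
  | .lam _ _ => by simp [ms]
  | .app _ _ => by simp [ms]
  | .tup _ => by simp [ms]
  | .proj _ _ => by simp [ms]
  | .letin y M N => by
    have := ms_pos N
    cases M <;> simp [ms] <;> omega
  | .pre l M => by have := ms_pos M; simp [ms]; omega
  | .post _ _ => by simp [ms]

theorem ms_letin_nonfun (x : Var) (C N : Tm) (h : NonFun C) :
    ms (.letin x C N) = 2 * ms N := by
  cases C <;> simp [ms]
  case lam ys B => exact absurd rfl (h ys B)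

theorem ms_hplug_lt (D : HCtx) {M N : Tm} (h : ms N < ms M) :
    ms (hplug D N) < ms (hplug D M) := by
  induction D with
  | hole => exact h
  | letC x C D ih =>
    cases C <;> simp [hplug, ms] <;> omega
  | letLam x ys D P ih =>
    simp [hplug, ms]; omega
  | pre l D ih =>
    simp [hplug, ms]; omega

/-- Every hoisting step strictly decreases `ms`; hence
there is no infinite sequence of hoisting steps. -/
theorem hoisting_terminates :
    (∀ M N, Hoist M N → ms N < ms M) ∧
    ¬ ∃ f : ℕ → Tm, ∀ n, Hoist (f n) (f (n + 1)) := by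
  have dec : ∀ M N, Hoist M N → ms N < ms M := by
    intro M N h
    cases h with
    | h1 D x C y zs T M hT hC hx =>
      apply ms_hplug_lt
      rw [ms_letin_nonfun x C (Tm.letin y (Tm.lam zs T) M) hC]
      simp only [ms]
      rw [ms_letin_nonfun x C M hC]
      have := ms_pos T
      omega
    | h2 D x ws y zs T M N hT hw =>
      apply ms_hplug_lt
      simp [ms]
      have := ms_pos T
      omega
    | h3 D l y zs T M hT =>
      apply ms_hplug_lt
      simp [ms]
      have := ms_pos T
      omega
  refine ⟨dec, ?_⟩
  rintro ⟨f, hf⟩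
  have key : ∀ n, ms (f n) + n ≤ ms (f 0) := by
    intro n
    induction n with
    | zero => omega
    | succ n ih =>
      have := dec _ _ (hf n)
      omega
  have := key (ms (f 0) + 1)
  omega

end CostLabelling
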